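/- Let a,b be positive reals and λ ≥ 2√(ab). No positive solution (x_n)_{n∈Z} of the difference equation a·x_{n-1} + b·x_{n+1} = λ·x_n (n ∈ Z) is summable, i.e. ∑_{n∈Z} x_n = ∞ for every positive solution. -/

import Mathlib

theorem stmt5 (a b lam : ℝ) (ha : 0 < a) (hb : 0 < b)
    (hlam : 2 * Real.sqrt (a * b) ≤ lam) (x : ℤ → ℝ) (hx : ∀ n, 0 < x n)
    (hrec : ∀ n : ℤ, a * x (n - 1) + b * x (n + 1) = lam * x n) :
    ¬ Summable x := by
  intro hsum
  -- reindexed summability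
  have hsum1 : Summable (fun n : ℤ => x (n - 1)) :=
    ((Equiv.subRight (1 : ℤ)).summable_iff (f := x)).2 hsum
  have hsum2 : Summable (fun n : ℤ => x (n + 1)) :=
    ((Equiv.addRight (1 : ℤ)).summable_iff (f := x)).2 hsum
  have ht1 : (∑' n : ℤ, x (n - 1)) = ∑' n, x n := (Equiv.subRight (1 : ℤ)).tsum_eq x
  have ht2 : (∑' n : ℤ, x (n + 1)) = ∑' n, x n := (Equiv.addRight (1 : ℤ)).tsum_eq x
  -- sum the recurrence: (a + b) S = lam S with S > 0, hence lam = a + b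
  have hSpos : 0 < ∑' n, x n := Summable.tsum_pos hsum (fun n => (hx n).le) 0 (hx 0)
  have hsum_eq : a * (∑' n : ℤ, x (n - 1)) + b * (∑' n : ℤ, x (n + 1))
      = lam * (∑' n, x n) := by
    rw [← tsum_mul_left, ← tsum_mul_left, ← tsum_mul_left,
      ← Summable.tsum_add (hsum1.mul_left a) (hsum2.mul_left b)]
    exact tsum_congr fun n => hrec n
  rw [ht1, ht2] at hsum_eq
  have hlab : lam = a + b := by
    have := mul_right_cancel₀ (ne_of_gt hSpos)
      (by linarith [hsum_eq] : (a + b) * (∑' n, x n) = lam * (∑' n, x n))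
    linarith
  -- differences
  set d : ℤ → ℝ := fun n => x (n + 1) - x n with hd_def
  have hrec' : ∀ n : ℤ, b * d n = a * d (n - 1) := by
    intro n
    have h := hrec n
    rw [hlab] at h
    simp only [hd_def]
    rw [show n - 1 + 1 = n from by ring]
    linarith
  have hq : ∀ n : ℤ, d n = (a / b) ^ n * d 0 := by
    intro n
    induction n using Int.induction_on with
    | zero => simp
    | succ k ih =>
        have h := hrec' (k + 1)
        rw [show (k : ℤ) + 1 - 1 = k from by ring] at h
        have hstep : d (k + 1) = (a / b) * d k := by
          field_simp at h ⊢
          linarith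
        rw [hstep, ih, zpow_add_one₀ (by positivity : (a / b : ℝ) ≠ 0)]
        ring
    | pred k ih =>
        have h := hrec' (-k)
        have hstep : d (-(k : ℤ) - 1) = (b / a) * d (-k) := by
          field_simp at h ⊢
          linarith
        rw [hstep, ih, zpow_sub_one₀ (by positivity : (a / b : ℝ) ≠ 0)]
        field_simp
  -- x tends to 0 at both infinities
  have hcof : Filter.Tendsto x Filter.cofinite (nhds 0) := hsum.tendsto_cofinite_zero
  rw [Int.cofinite_eq] at hcof
  have htop : Filter.Tendsto x Filter.atTop (nhds 0) := hcof.mono_left le_sup_right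
  have hbot : Filter.Tendsto x Filter.atBot (nhds 0) := hcof.mono_left le_sup_left
  have htop1 : Filter.Tendsto (fun n : ℤ => x (n + 1)) Filter.atTop (nhds 0) :=
    htop.comp (Filter.tendsto_atTop_add_const_right _ 1 Filter.tendsto_id)
  have hbot1 : Filter.Tendsto (fun n : ℤ => x (n + 1)) Filter.atBot (nhds 0) :=
    hbot.comp (Filter.tendsto_atBot_add_const_right _ 1 Filter.tendsto_id)
  have hdtop : Filter.Tendsto d Filter.atTop (nhds 0) := by
    have := htop1.sub htop
    simpa using this
  have hdbot : Filter.Tendsto d Filter.atBot (nhds 0) := by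
    have := hbot1.sub hbot
    simpa using this
  -- d 0 = 0
  have hd0 : d 0 = 0 := by
    by_contra hne
    have habs : (0 : ℝ) < |d 0| := abs_pos.2 hne
    rcases le_total b a with hba | hab
    · -- a/b ≥ 1, so |d n| ≥ |d 0| for n ≥ 0, contradicting hdtop
      have hev : ∀ n : ℤ, 0 ≤ n → |d 0| ≤ |d n| := by
        intro n hn
        have hp : (0:ℝ) < (a / b) ^ n := zpow_pos (by positivity) n
        rw [hq n, abs_mul, abs_of_pos hp]
        nlinarith [one_le_zpow₀ (by rw [le_div_iff₀ hb]; linarith : (1:ℝ) ≤ a / b) hn,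
          abs_nonneg (d 0)]
      rw [Metric.tendsto_atTop] at hdtop
      obtain ⟨N, hN⟩ := hdtop |d 0| habs
      have h1 := hN (max N 0) (le_max_left _ _)
      have h2 := hev (max N 0) (le_max_right _ _)
      rw [Real.dist_eq, sub_zero] at h1
      linarith
    · -- a/b ≤ 1, so |d n| ≥ |d 0| for n ≤ 0
      have hev : ∀ n : ℤ, n ≤ 0 → |d 0| ≤ |d n| := by
        intro n hn
        have hp : (0:ℝ) < (a / b) ^ n := zpow_pos (by positivity) n
        rw [hq n, abs_mul, abs_of_pos hp]
        have h1 : (1:ℝ) ≤ (a / b) ^ n := by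
          have := one_le_zpow₀ (by rw [le_div_iff₀ ha]; linarith : (1:ℝ) ≤ b / a)
            (by linarith : (0:ℤ) ≤ -n)
          rwa [show (b / a : ℝ) = (a / b)⁻¹ by rw [inv_div], inv_zpow, zpow_neg,
            inv_inv] at this
        nlinarith [abs_nonneg (d 0)]
      have hcomp : Filter.Tendsto (fun n : ℤ => d (-n)) Filter.atTop (nhds 0) :=
        hdbot.comp Filter.tendsto_neg_atTop_atBot
      rw [Metric.tendsto_atTop] at hcomp
      obtain ⟨N, hN⟩ := hcomp |d 0| habs
      have h1 := hN (max N 0) (le_max_left _ _)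
      have h2 := hev (-(max N 0)) (by simp [le_max_right])
      simp only [Real.dist_eq, sub_zero] at h1
      linarith
  -- hence x is constant
  have hconst : ∀ n : ℤ, x n = x 0 := by
    have hdz : ∀ n : ℤ, d n = 0 := by intro n; rw [hq n, hd0]; ring
    intro n
    induction n using Int.induction_on with
    | zero => rfl
    | succ k ih =>
        have hk := hdz k
        simp only [hd_def] at hk
        have : x (k + 1) = x k := by linarith
        rw [this, ih]
    | pred k ih =>
        have hk := hdz (-(k : ℤ) - 1)
        simp only [hd_def] at hk
        have h2 : x (-(k : ℤ) - 1) = x (-(k : ℤ) - 1 + 1) := by linarith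
        rw [show (-(k : ℤ) - 1 + 1) = -(k : ℤ) from by ring] at h2
        rw [h2, ih]
  -- constant positive sequence cannot tend to 0
  have hlim : Filter.Tendsto x Filter.atTop (nhds (x 0)) := by
    have hxc : x = fun _ : ℤ => x 0 := funext hconst
    rw [hxc]
    exact tendsto_const_nhds
  have hx0 : x 0 = 0 := tendsto_nhds_unique hlim htop
  exact absurd hx0 (ne_of_gt (hx 0))
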